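/- Define f_n : {0,1}^n → {0,1}^n by replacing, in every maximal run of 1's of even length, the last 1 of that run by a 0. Then f_n(x) always has all runs of 1's of odd length, and if f_n(x) = f_n(y) for distinct x, y ∈ {0,1}^n, then x and y are NOT G-distinguishable, where G is the complete graph on {00, 01, 11}. -/

import Mathlib

def bpair (x : List Bool) (i : ℕ) : Bool × Bool := (x.getD i false, x.getD (i+1) false)

/-- Every maximal run of 1's in `x` has odd length. -/
def OddRuns (x : List Bool) : Prop :=
  ∀ i l : ℕ, 0 < l → i + l ≤ x.length →
    (∀ j < l, x.getD (i + j) false = true) →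
    (i = 0 ∨ x.getD (i - 1) false = false) →
    (i + l = x.length ∨ x.getD (i + l) false = false) →
    Odd l

/-- `G`-distinguishability: `G` is the complete graph on `{00, 01, 11}`. -/
def Gdist (n : ℕ) (x y : List Bool) : Prop :=
  ∃ i, i + 1 < n ∧ bpair x i ≠ bpair y i ∧
    bpair x i ≠ (true, false) ∧ bpair y i ≠ (true, false)

/-- Length of the run of consecutive 1's of `x` ending at position `i`. -/
def runLen (x : List Bool) : ℕ → ℕ
  | 0 => if x.getD 0 false then 1 else 0
  | i + 1 => if x.getD (i + 1) false then runLen x i + 1 else 0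

/-- `fG x` replaces, in every maximal run of 1's of even length, the last 1 by a 0. -/
def fG (x : List Bool) : List Bool :=
  (List.range x.length).map fun i =>
    if x.getD i false = true ∧ (i + 1 = x.length ∨ x.getD (i + 1) false = false) ∧
        Even (runLen x i) then false
    else x.getD i false

/-- `fG` always produces a string all of whose runs of 1's are odd, and strings identified
by `fG` are not `G`-distinguishable. -/
lemma fG_length (x : List Bool) : (fG x).length = x.length := by simp [fG]

lemma fG_getD (x : List Bool) (i : ℕ) (h : i < x.length) :
    (fG x).getD i false =
      if x.getD i false = true ∧ (i + 1 = x.length ∨ x.getD (i + 1) false = false) ∧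
        Even (runLen x i) then false
      else x.getD i false := by
  simp [fG, List.getD, List.getElem?_map, List.getElem?_range h]

lemma runLen_zero_of_false (x : List Bool) (i : ℕ) (h : x.getD i false = false) :
    runLen x i = 0 := by
  cases i <;> simp only [runLen, h] <;> simp

lemma runLen_succ_of_true (x : List Bool) (i : ℕ) (h : x.getD (i+1) false = true) :
    runLen x (i+1) = runLen x i + 1 := by
  simp only [runLen, h] ; simp

lemma key (x y : List Bool) (k : ℕ) (hk : k < x.length)
    (hfG : fG x = fG y) (hxk : x.getD k false = true) (hyk : y.getD k false = false) :
    (k + 1 = x.length ∨ x.getD (k+1) false = false) ∧ Even (runLen x k) := by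
  have hz : (fG x).getD k false = (fG y).getD k false := by rw [hfG]
  have hzy : (fG y).getD k false = false := by
    by_cases hky : k < y.length
    · rw [fG_getD y k hky]; split
      · rfl
      · exact hyk
    · exact List.getD_eq_default _ _ (by rw [fG_length]; omega)
  rw [hzy, fG_getD x k hk] at hz
  by_contra hc
  rw [if_neg] at hz
  · rw [hxk] at hz; simp at hz
  · rintro ⟨-, h2, h3⟩; exact hc ⟨h2, h3⟩

lemma runLen_run (x : List Bool) (i : ℕ)
    (h0 : i = 0 ∨ x.getD (i-1) false = false) :
    ∀ j, (∀ k ≤ j, x.getD (i+k) false = true) → runLen x (i+j) = j+1 := by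
  intro j
  induction j with
  | zero =>
    intro h
    have h1 : x.getD i false = true := by simpa using h 0 le_rfl
    rcases i with _ | m
    · simp only [Nat.add_zero]
      simp only [runLen, h1]; simp
    · have hm : x.getD m false = false := by
        rcases h0 with h0 | h0
        · exact absurd h0 (Nat.succ_ne_zero m)
        · simpa using h0
      simp only [Nat.add_zero]
      rw [runLen_succ_of_true x m h1, runLen_zero_of_false x m hm]
  | succ j ih =>
    intro h
    have h1 : x.getD (i+j+1) false = true := by
      have := h (j+1) le_rfl; simpa [Nat.add_assoc] using this
    have := ih (fun k hk => h k (by omega))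
    rw [show i + (j+1) = (i+j)+1 by omega, runLen_succ_of_true x (i+j) h1, this]

theorem stmt7 (n : ℕ) :
    (∀ x : List Bool, x.length = n → OddRuns (fG x)) ∧
    (∀ x y : List Bool, x.length = n → y.length = n → x ≠ y → fG x = fG y →
      ¬ Gdist n x y) := by
  constructor
  · -- odd runs
    intro x hx i l hl hle hrun hleft hright
    rw [fG_length] at hle
    -- positions of the run in x are true
    have hxrun : ∀ j < l, x.getD (i+j) false = true := by
      intro j hj
      have hlt : i + j < x.length := by omega
      have := hrun j hj
      rw [fG_getD x (i+j) hlt] at this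
      split at this
      · simp at this
      · exact this
    have hx0 : x.getD i false = true := by simpa using hxrun 0 hl
    -- left boundary in x
    have hxleft : i = 0 ∨ x.getD (i-1) false = false := by
      rcases Nat.eq_zero_or_pos i with h | h
      · exact Or.inl h
      rcases hleft with h0 | h0
      · exact Or.inl h0
      right
      obtain ⟨m, rfl⟩ : ∃ m, i = m + 1 := ⟨i - 1, by omega⟩
      simp only [Nat.add_sub_cancel] at h0 ⊢
      rw [fG_getD x m (by omega)] at h0
      by_contra hc
      rw [if_neg] at h0
      · exact hc h0
      · rintro ⟨-, h2, -⟩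
        rcases h2 with h2 | h2
        · omega
        · rw [h2] at hx0; simp at hx0
    have hrl : ∀ j < l, runLen x (i+j) = j + 1 := fun j hj =>
      runLen_run x i hxleft j (fun k hk => hxrun k (by omega))
    obtain ⟨m, rfl⟩ : ∃ m, l = m + 1 := ⟨l - 1, by omega⟩
    have hrlm : runLen x (i+m) = m + 1 := hrl m (by omega)
    have hxm : x.getD (i+m) false = true := hxrun m (by omega)
    -- the last run position is not flipped in fG x
    have hnot : ¬ (x.getD (i+m) false = true ∧
        (i+m+1 = x.length ∨ x.getD (i+m+1) false = false) ∧ Even (runLen x (i+m))) := by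
      intro hc
      have := hrun m (by omega)
      rw [fG_getD x (i+m) (by omega), if_pos hc] at this
      simp at this
    rw [← Nat.not_even_iff_odd]
    by_cases hend : i + (m+1) = x.length
    · intro hev
      exact hnot ⟨hxm, Or.inl (by omega), by rwa [hrlm]⟩
    · rcases hright with h | h
      · rw [fG_length] at h; exact absurd h hend
      have hlt : i + (m+1) < x.length := by omega
      by_cases hxl : x.getD (i+(m+1)) false = true
      · -- position i+l flipped in x : Even (l+1), so Odd l
        have hz := h
        rw [fG_getD x (i+(m+1)) hlt] at hz
        have hflip : Even (runLen x (i+(m+1))) := by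
          by_contra hc
          rw [if_neg (by rintro ⟨-, -, h3⟩; exact hc h3)] at hz
          rw [hxl] at hz; simp at hz
        have : runLen x (i+(m+1)) = m + 2 := by
          rw [show i+(m+1) = (i+m)+1 by omega,
            runLen_succ_of_true x (i+m) (by rwa [show (i+m)+1 = i+(m+1) by omega]), hrlm]
        rw [this] at hflip
        intro hev
        rw [Nat.even_add_one] at hflip
        exact hflip (by simpa [Nat.even_add_one] using hev)
      · intro hev
        exact hnot ⟨hxm, Or.inr (by simpa [Bool.not_eq_true, show i+m+1 = i+(m+1) by omega]
          using hxl), by rwa [hrlm]⟩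
  · -- not G-distinguishable
    intro x y hx hy hne hfxy
    rintro ⟨i, hi, hdiff, hxp, hyp⟩
    have hix : i + 1 < x.length := by omega
    have hiy : i + 1 < y.length := by omega
    cases h1 : x.getD i false <;> cases h2 : y.getD i false <;>
      cases h3 : x.getD (i+1) false <;> cases h4 : y.getD (i+1) false <;>
      simp only [bpair, h1, h2, h3, h4, ne_eq, Prod.mk.injEq, not_and] at hdiff hxp hyp
    -- remaining cases
    · simp at hdiff
    · -- f f f t : y flipped at i+1, y_i = false
      obtain ⟨-, he⟩ := key y x (i+1) hiy hfxy.symm h4 h3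
      have : runLen y (i+1) = 1 := by
        rw [runLen_succ_of_true y i h4, runLen_zero_of_false y i h2]
      rw [this] at he; norm_num at he
    · -- f f t f : x flipped at i+1, x_i = false
      obtain ⟨-, he⟩ := key x y (i+1) hix hfxy h3 h4
      have : runLen x (i+1) = 1 := by
        rw [runLen_succ_of_true x i h3, runLen_zero_of_false x i h1]
      rw [this] at he; norm_num at he
    · simp at hdiff
    · -- f t f f : bpair y = (t,f)
      simp at hyp
    · -- f t f t : y_i = true, x_i = false: key y at i gives y_{i+1}=false contra h4
      obtain ⟨hend, -⟩ := key y x i (by omega) hfxy.symm h2 h1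
      rcases hend with h | h
      · omega
      · rw [h4] at h; simp at h
    · -- f t t f
      simp at hyp
    · -- f t t t
      obtain ⟨hend, -⟩ := key y x i (by omega) hfxy.symm h2 h1
      rcases hend with h | h
      · omega
      · rw [h4] at h; simp at h
    · -- t f f f : bpair x = (t,f)
      simp at hxp
    · simp at hxp
    · -- t f t f : key x at i gives x_{i+1} = false contra h3
      obtain ⟨hend, -⟩ := key x y i (by omega) hfxy h1 h2
      rcases hend with h | h
      · omega
      · rw [h3] at h; simp at h
    · -- t f t t
      obtain ⟨hend, -⟩ := key x y i (by omega) hfxy h1 h2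
      rcases hend with h | h
      · omega
      · rw [h3] at h; simp at h
    · simp at hdiff
    · -- t t f t : bpair x = (t,f)
      simp at hxp
    · -- t t t f : bpair y = (t,f)
      simp at hyp
    · simp at hdiff
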